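/- Let f(x,t) solve the heat equation ∂_t f = ∂²_x f on ℝ with bounded initial data f(x,0) = sin(x)/(1+x²). Then for each fixed t₀ > 0, f(x,t₀) = O(|x|^{−2}) as |x| → ∞, but it is not true that f(x,t₀) = o(|x|^{−2}); in particular the spatial decay rate of the solution does not improve for positive time. -/

import Mathlib

open Filter Asymptotics Real Set Topology

namespace HeatAux



lemma cpos (x : ℝ) : (0:ℝ) < 1 + x^2 := by positivity
lemma cone (x : ℝ) : (1:ℝ) ≤ 1 + x^2 := by nlinarith [sq_nonneg x]

noncomputable def qf (x : ℝ) : ℝ := (1 + x^2)⁻¹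
noncomputable def rf (x : ℝ) : ℝ := (1 + x^2) ^ (-(3:ℝ)/2)
noncomputable def pf (x : ℝ) : ℝ := Real.sin x * qf x
noncomputable def Q1 (x : ℝ) : ℝ := -(2*x) / (1 + x^2)^2
noncomputable def Q2 (x : ℝ) : ℝ := -2/(1+x^2)^2 + 8*x^2/(1+x^2)^3
noncomputable def P1 (x : ℝ) : ℝ := Real.cos x * qf x + Real.sin x * Q1 x
noncomputable def P2 (x : ℝ) : ℝ := -Real.sin x * qf x + 2*(Real.cos x * Q1 x) + Real.sin x * Q2 x
noncomputable def R1 (x : ℝ) : ℝ := (-3*x) * (1 + x^2) ^ (-(5:ℝ)/2)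
noncomputable def R2 (x : ℝ) : ℝ := -3 * (1 + x^2) ^ (-(5:ℝ)/2) + 15 * x^2 * (1 + x^2) ^ (-(7:ℝ)/2)

lemma hasDerivAt_base (x : ℝ) : HasDerivAt (fun y : ℝ => 1 + y^2) (2*x) x := by
  simpa using ((hasDerivAt_pow 2 x).const_add 1)

lemma hasDerivAt_qf (x : ℝ) : HasDerivAt qf (Q1 x) x := by
  exact (by simpa [Q1] using (hasDerivAt_base x).fun_inv (ne_of_gt (cpos x)) :
    HasDerivAt (fun y : ℝ => (1 + y^2)⁻¹) (Q1 x) x)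

lemma hasDerivAt_Q1 (x : ℝ) : HasDerivAt Q1 (Q2 x) x := by
  have h1 : HasDerivAt (fun y : ℝ => -(2*y)) (-2) x := by
    simpa using ((hasDerivAt_id x).const_mul (2:ℝ)).fun_neg
  have h2 : HasDerivAt (fun y : ℝ => (1+y^2)^2) (2*(1+x^2)*(2*x)) x := by
    simpa using (hasDerivAt_base x).fun_pow 2
  have : HasDerivAt Q1 _ x := h1.fun_div h2 (by positivity)
  convert this using 1
  have := cpos x
  unfold Q2
  field_simp
  ring

lemma hasDerivAt_pf (x : ℝ) : HasDerivAt pf (P1 x) x :=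
  (Real.hasDerivAt_sin x).mul (hasDerivAt_qf x)

lemma hasDerivAt_P1 (x : ℝ) : HasDerivAt P1 (P2 x) x := by
  have : HasDerivAt P1 _ x := ((Real.hasDerivAt_cos x).fun_mul (hasDerivAt_qf x)).fun_add
    ((Real.hasDerivAt_sin x).fun_mul (hasDerivAt_Q1 x))
  convert this using 1
  simp [P2]; ring

lemma hasDerivAt_rf (x : ℝ) : HasDerivAt rf (R1 x) x := by
  have : HasDerivAt rf _ x := (hasDerivAt_base x).rpow_const (p := -(3:ℝ)/2) (Or.inl (ne_of_gt (cpos x)))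
  convert this using 1
  rw [show -(3:ℝ)/2 - 1 = -(5:ℝ)/2 by norm_num] at this ⊢
  simp [R1]; ring

lemma hasDerivAt_R1 (x : ℝ) : HasDerivAt R1 (R2 x) x := by
  have hb := (hasDerivAt_base x).rpow_const (p := -(5:ℝ)/2) (Or.inl (ne_of_gt (cpos x)))
  have h1 : HasDerivAt (fun y : ℝ => -3*y) (-3 : ℝ) x := by
    simpa using (hasDerivAt_id x).const_mul (-3:ℝ)
  have : HasDerivAt R1 _ x := h1.fun_mul hb
  convert this using 1
  rw [show -(5:ℝ)/2 - 1 = -(7:ℝ)/2 by norm_num] at this ⊢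
  simp [R2]; ring


-- rpow exponent monotonicity helpers
lemma rf_nonneg (x : ℝ) : 0 ≤ rf x := Real.rpow_nonneg (cpos x).le _
lemma qf_nonneg (x : ℝ) : 0 ≤ qf x := by
  have := cpos x; simp [qf]; positivity
lemma qf_le_one (x : ℝ) : qf x ≤ 1 := by
  rw [qf, inv_le_one_iff₀]; right; exact cone x
lemma abs_pf_le (x : ℝ) : |pf x| ≤ qf x := by
  rw [pf, abs_mul, abs_of_nonneg (qf_nonneg x)]
  calc |Real.sin x| * qf x ≤ 1 * qf x := by
        exact mul_le_mul_of_nonneg_right (Real.abs_sin_le_one x) (qf_nonneg x)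
    _ = qf x := one_mul _

-- (1+x²)⁻² ≤ rf x
lemma inv_sq_le_rf (x : ℝ) : ((1+x^2)^2)⁻¹ ≤ rf x := by
  have h2 : ((1+x^2):ℝ)^2 = (1+x^2) ^ ((2:ℕ):ℝ) := (Real.rpow_natCast _ 2).symm
  rw [h2, ← Real.rpow_neg (cpos x).le, rf]
  exact Real.rpow_le_rpow_of_exponent_le (cone x) (by norm_num)

-- rf ≤ qf
lemma rf_le_qf (x : ℝ) : rf x ≤ qf x := by
  have h1 : ((1+x^2):ℝ)⁻¹ = (1+x^2) ^ ((-1:ℝ)) := by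
    rw [Real.rpow_neg_one]
  rw [qf, h1, rf]
  exact Real.rpow_le_rpow_of_exponent_le (cone x) (by norm_num)

-- |x| / (1+x²)² ≤ rf x
lemma abs_x_div_le_rf (x : ℝ) : |x| * ((1+x^2)^2)⁻¹ ≤ rf x := by
  have hx : |x| ≤ (1+x^2) ^ ((1:ℝ)/2) := by
    rw [← Real.sqrt_eq_rpow, ← Real.sqrt_sq_eq_abs]
    exact Real.sqrt_le_sqrt (by nlinarith [sq_nonneg x])
  have h2 : (((1+x^2):ℝ)^2)⁻¹ = (1+x^2) ^ ((-2:ℝ)) := by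
    rw [show ((-2):ℝ) = -((2:ℕ):ℝ) by norm_num, Real.rpow_neg (cpos x).le, Real.rpow_natCast]
  rw [h2]
  calc |x| * (1+x^2) ^ ((-2:ℝ)) ≤ (1+x^2) ^ ((1:ℝ)/2) * (1+x^2) ^ ((-2:ℝ)) := by
        exact mul_le_mul_of_nonneg_right hx (Real.rpow_nonneg (cpos x).le _)
    _ = (1+x^2) ^ ((1:ℝ)/2 + (-2:ℝ)) := (Real.rpow_add (cpos x) _ _).symm
    _ = rf x := by rw [rf]; norm_num

-- key bound |pf + P2| ≤ 14 rf
lemma abs_pf_add_P2_le (x : ℝ) : |pf x + P2 x| ≤ 14 * rf x := by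
  have hc := cpos x
  have e1 : pf x + P2 x = 2*(Real.cos x * Q1 x) + Real.sin x * Q2 x := by
    simp [pf, P2]; ring
  rw [e1]
  have b1 : |2*(Real.cos x * Q1 x)| ≤ 4 * rf x := by
    have : |2*(Real.cos x * Q1 x)| = 2 * |Real.cos x| * |Q1 x| := by
      rw [abs_mul, abs_mul]; simp [abs_of_nonneg, mul_assoc]
    rw [this]
    have hQ1 : |Q1 x| = 2 * (|x| * ((1+x^2)^2)⁻¹) := by
      rw [Q1, abs_div, abs_neg, abs_mul]
      rw [abs_of_nonneg (by positivity : (0:ℝ) ≤ (1+x^2)^2)]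
      simp [abs_of_nonneg, div_eq_mul_inv]; ring
    calc 2 * |Real.cos x| * |Q1 x| ≤ 2 * 1 * |Q1 x| := by
          apply mul_le_mul_of_nonneg_right _ (abs_nonneg _)
          exact mul_le_mul_of_nonneg_left (Real.abs_cos_le_one x) (by norm_num)
      _ = 2 * |Q1 x| := by ring
      _ = 4 * (|x| * ((1+x^2)^2)⁻¹) := by rw [hQ1]; ring
      _ ≤ 4 * rf x := by
          exact mul_le_mul_of_nonneg_left (abs_x_div_le_rf x) (by norm_num)
  have b2 : |Real.sin x * Q2 x| ≤ 10 * rf x := by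
    have hQ2 : |Q2 x| ≤ 10 * ((1+x^2)^2)⁻¹ := by
      rw [Q2]
      have h8 : 8*x^2/(1+x^2)^3 ≤ 8 * ((1+x^2)^2)⁻¹ := by
        rw [div_le_iff₀ (by positivity)]
        have hcc : ((1+x^2)^2)⁻¹ * (1+x^2)^3 = 1+x^2 := by
          field_simp
        rw [mul_assoc, hcc]
        nlinarith [sq_nonneg x]
      have h8' : (0:ℝ) ≤ 8*x^2/(1+x^2)^3 := by positivity
      have h2 : |(-2)/(1+x^2)^2| = 2 * ((1+x^2)^2)⁻¹ := by
        rw [abs_div, abs_neg, abs_of_nonneg (by positivity : (0:ℝ) ≤ (1+x^2)^2)]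
        simp [div_eq_mul_inv]
      calc |(-2)/(1+x^2)^2 + 8*x^2/(1+x^2)^3| ≤ |(-2)/(1+x^2)^2| + |8*x^2/(1+x^2)^3| :=
            abs_add_le _ _
        _ = 2 * ((1+x^2)^2)⁻¹ + 8*x^2/(1+x^2)^3 := by rw [h2, abs_of_nonneg h8']
        _ ≤ 2 * ((1+x^2)^2)⁻¹ + 8 * ((1+x^2)^2)⁻¹ := by linarith
        _ = 10 * ((1+x^2)^2)⁻¹ := by ring
    calc |Real.sin x * Q2 x| ≤ 1 * |Q2 x| := by
          rw [abs_mul]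
          exact mul_le_mul_of_nonneg_right (Real.abs_sin_le_one x) (abs_nonneg _)
      _ = |Q2 x| := one_mul _
      _ ≤ 10 * ((1+x^2)^2)⁻¹ := hQ2
      _ ≤ 10 * rf x := mul_le_mul_of_nonneg_left (inv_sq_le_rf x) (by norm_num)
  calc |2*(Real.cos x * Q1 x) + Real.sin x * Q2 x| ≤ _ + _ := abs_add_le _ _
    _ ≤ 4 * rf x + 10 * rf x := add_le_add b1 b2
    _ = 14 * rf x := by ring

-- R2 ≤ 15 rf
lemma R2_le (x : ℝ) : R2 x ≤ 15 * rf x := by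
  have hc := cpos x
  have h1 : (15:ℝ) * x^2 * (1+x^2) ^ (-(7:ℝ)/2) ≤ 15 * (1+x^2) ^ (-(5:ℝ)/2) := by
    have hx2 : x^2 ≤ 1 + x^2 := by nlinarith
    have : x^2 * (1+x^2) ^ (-(7:ℝ)/2) ≤ (1+x^2) * (1+x^2) ^ (-(7:ℝ)/2) :=
      mul_le_mul_of_nonneg_right hx2 (Real.rpow_nonneg hc.le _)
    have heq : (1+x^2) * (1+x^2) ^ (-(7:ℝ)/2) = (1+x^2) ^ (-(5:ℝ)/2) := by
      rw [← Real.rpow_one_add' (by positivity) (by norm_num)]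
      norm_num
    nlinarith [this, heq]
  have h2 : ((1+x^2):ℝ) ^ (-(5:ℝ)/2) ≤ (1+x^2) ^ (-(3:ℝ)/2) :=
    Real.rpow_le_rpow_of_exponent_le (cone x) (by norm_num)
  have h3 : (0:ℝ) ≤ 3 * (1+x^2) ^ (-(5:ℝ)/2) := by positivity
  rw [R2, rf]
  nlinarith [h1, h2]

-- the key supersolution inequality
lemma key (x t : ℝ) (ht : 0 ≤ t) (G : ℝ) (hG : |G| ≤ 14 * rf x) :
    0 ≤ Real.exp (-t) * G + (15*Real.exp (15*t) + Real.exp (-t)) * rf x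
      - (Real.exp (15*t) - Real.exp (-t)) * R2 x := by
  have hA : 0 < Real.exp (-t) := Real.exp_pos _
  have hB : Real.exp (-t) ≤ Real.exp (15*t) := Real.exp_le_exp.2 (by linarith)
  have hr := rf_nonneg x
  have hR := R2_le x
  have hG' : -(14 * rf x) ≤ G := neg_le_of_abs_le hG
  nlinarith [mul_nonneg (sub_nonneg.2 hB) (sub_nonneg.2 hR),
    mul_nonneg hA.le (by linarith : (0:ℝ) ≤ G + 14 * rf x),
    mul_nonneg hA.le hr]



/-- Second derivative test: at a local min of a `C²` function, `(g'')(x) ≥ 0`. -/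
lemma second_deriv_nonneg_of_isLocalMin {g : ℝ → ℝ} {x₁ : ℝ}
    (hg : ContDiff ℝ 2 g) (hmin : IsLocalMin g x₁) : 0 ≤ deriv (deriv g) x₁ := by
  by_contra hcon
  push_neg at hcon
  have hg2 : ContDiff ℝ (1+1) g := by norm_num; exact hg
  obtain ⟨hdiff, -, hd1⟩ := contDiff_succ_iff_deriv.mp hg2
  have hderiv_diff : Differentiable ℝ (deriv g) := hd1.differentiable (by norm_num)
  have h0 : deriv g x₁ = 0 := hmin.deriv_eq_zero
  have hdd : HasDerivAt (deriv g) (deriv (deriv g) x₁) x₁ :=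
    (hderiv_diff x₁).hasDerivAt
  have hslope : Tendsto (slope (deriv g) x₁) (𝓝[≠] x₁) (𝓝 (deriv (deriv g) x₁)) :=
    hasDerivAt_iff_tendsto_slope.mp hdd
  have hslope' : Tendsto (slope (deriv g) x₁) (𝓝[>] x₁) (𝓝 (deriv (deriv g) x₁)) :=
    hslope.mono_left (nhdsWithin_mono _ (fun y hy => ne_of_gt hy))
  have hev : ∀ᶠ y in 𝓝[>] x₁, slope (deriv g) x₁ y < 0 :=
    hslope'.eventually_lt_const hcon
  have hev2 : ∀ᶠ y in 𝓝[>] x₁, deriv g y < 0 := by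
    filter_upwards [hev, self_mem_nhdsWithin] with y hy (hy2 : x₁ < y)
    rw [slope_def_field, h0] at hy
    have : y - x₁ > 0 := by linarith
    have := div_neg_iff.mp (by simpa [div_eq_iff] using hy)
    rcases this with ⟨h1, h2⟩ | ⟨h1, h2⟩
    · linarith
    · simpa using h1
  have hev3 : ∀ᶠ y in 𝓝 x₁, g x₁ ≤ g y := hmin
  have hev4 : ∀ᶠ y in 𝓝[>] x₁, g x₁ ≤ g y := hev3.filter_mono nhdsWithin_le_nhds
  have hmem : {y | deriv g y < 0 ∧ g x₁ ≤ g y} ∈ 𝓝[>] x₁ := (hev2.and hev4)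
  obtain ⟨u, hu, husub⟩ := mem_nhdsGT_iff_exists_Ioo_subset.mp hmem
  set y := (x₁ + u)/2 with hy
  have hyu : y ∈ Ioo x₁ u := by constructor <;> (simp [hy]; linarith [mem_Ioi.mp hu])
  have hanti : StrictAntiOn g (Icc x₁ y) := by
    apply strictAntiOn_of_deriv_neg (convex_Icc _ _) (hg.continuous.continuousOn)
    intro z hz
    rw [interior_Icc] at hz
    have : z ∈ Ioo x₁ u := ⟨hz.1, lt_of_lt_of_le hz.2 (by linarith [hyu.2, hz.2])⟩
    exact (husub this).1
  have h5 : g y < g x₁ := hanti (left_mem_Icc.mpr (by linarith [hyu.1])) 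
    (right_mem_Icc.mpr (by linarith [hyu.1])) hyu.1
  exact absurd (husub hyu).2 (not_le.mpr h5)

/-- At a min over `[0, t₁]` attained at the right endpoint, the derivative is `≤ 0`. -/
lemma deriv_nonpos_right {k : ℝ → ℝ} {t₁ d : ℝ} (h0 : 0 < t₁)
    (hd : HasDerivAt k d t₁) (hmin : ∀ s ∈ Icc 0 t₁, k t₁ ≤ k s) : d ≤ 0 := by
  have hslope : Tendsto (slope k t₁) (𝓝[<] t₁) (𝓝 d) :=
    (hasDerivAt_iff_tendsto_slope.mp hd).mono_left
      (nhdsWithin_mono _ (fun y hy => ne_of_lt hy))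
  have hev : ∀ᶠ s in 𝓝[<] t₁, slope k t₁ s ≤ 0 := by
    filter_upwards [Ioo_mem_nhdsLT_of_mem (by constructor <;> [exact h0; rfl] :
      t₁ ∈ Ioc (0:ℝ) t₁)] with s hs
    have h1 : k t₁ ≤ k s := hmin s ⟨hs.1.le, hs.2.le⟩
    rw [slope_def_field]
    apply div_nonpos_of_nonneg_of_nonpos
    · linarith
    · linarith [hs.2]
  exact le_of_tendsto hslope hev

/-- Parabolic minimum principle on `ℝ × [0,∞)` for bounded-below supersolutions. -/
lemma minPrinciple (w : ℝ → ℝ → ℝ)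
    (hcont : ContinuousOn (fun p : ℝ × ℝ => w p.1 p.2) {p : ℝ × ℝ | 0 ≤ p.2})
    (hbdd : ∃ M : ℝ, ∀ x t : ℝ, 0 ≤ t → -M ≤ w x t)
    (hinit : ∀ x : ℝ, 0 ≤ w x 0)
    (hC2 : ∀ t : ℝ, 0 < t → ContDiff ℝ 2 (fun y => w y t))
    (hsuper : ∀ x t : ℝ, 0 < t → ∃ d : ℝ, HasDerivAt (fun s => w x s) d t ∧
      deriv (deriv (fun y => w y t)) x ≤ d) :
    ∀ x t : ℝ, 0 ≤ t → 0 ≤ w x t := by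
  intro x₀ t₀ ht₀
  rcases eq_or_lt_of_le ht₀ with h | h
  · rw [← h]; exact hinit x₀
  by_contra hcon
  push_neg at hcon
  set a : ℝ := -w x₀ t₀ with ha
  have hapos : 0 < a := by simp [ha]; linarith
  set ε : ℝ := a / (2*(x₀^2 + 3*t₀ + 1)) with hε
  have hεpos : 0 < ε := by
    apply div_pos hapos; positivity
  obtain ⟨M, hM⟩ := hbdd
  set M₀ : ℝ := |M| with hM₀
  have hM' : ∀ x t : ℝ, 0 ≤ t → -M₀ ≤ w x t := by
    intro x t ht
    calc -M₀ ≤ -M := by simp [hM₀]; exact le_abs_self M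
      _ ≤ w x t := hM x t ht
  set R : ℝ := Real.sqrt ((M₀+1)/ε) + |x₀| + 1 with hR
  have hR1 : 1 ≤ R := by
    have := Real.sqrt_nonneg ((M₀+1)/ε); have := abs_nonneg x₀; simp [hR]; linarith
  have hRx : |x₀| < R := by
    have := Real.sqrt_nonneg ((M₀+1)/ε); simp [hR]; linarith
  have hRM : M₀ + 1 ≤ ε * R^2 := by
    rcases le_or_gt (M₀+1) 0 with hneg | hpos
    · have : 0 < ε * R^2 := by positivity
      linarith
    · have hq : 0 ≤ (M₀+1)/ε := by positivity
      have h1 : Real.sqrt ((M₀+1)/ε) ≤ R := by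
        have := abs_nonneg x₀; simp [hR]; linarith
      have h2 : (M₀+1)/ε ≤ R^2 := by
        rw [← Real.sq_sqrt hq]
        exact pow_le_pow_left₀ (Real.sqrt_nonneg _) h1 2
      calc M₀ + 1 = ε * ((M₀+1)/ε) := by field_simp
        _ ≤ ε * R^2 := mul_le_mul_of_nonneg_left h2 hεpos.le
  -- the perturbed function and its min over the compact cylinder
  set Φ : ℝ × ℝ → ℝ := fun p => w p.1 p.2 + ε * (p.1^2 + 3*p.2) with hΦ
  set Q : Set (ℝ × ℝ) := Icc (-R) R ×ˢ Icc 0 t₀ with hQ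
  have hQc : IsCompact Q := (isCompact_Icc).prod (isCompact_Icc)
  have hQsub : Q ⊆ {p : ℝ × ℝ | 0 ≤ p.2} := by
    rintro ⟨x, t⟩ ⟨-, ht⟩; exact ht.1
  have hΦcont : ContinuousOn Φ Q := by
    apply ContinuousOn.add (hcont.mono hQsub)
    fun_prop
  have hx₀Q : (x₀, t₀) ∈ Q := by
    constructor
    · constructor <;> [linarith [abs_le.mp hRx.le |>.1]; linarith [abs_le.mp hRx.le |>.2]]
    · exact ⟨ht₀, le_rfl⟩
  have hQne : Q.Nonempty := ⟨(x₀, t₀), hx₀Q⟩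
  obtain ⟨z, hzQ, hzmin⟩ := hQc.exists_isMinOn hQne hΦcont
  obtain ⟨x₁, t₁⟩ := z
  have hzmin' : ∀ p ∈ Q, Φ (x₁, t₁) ≤ Φ p := fun p hp => hzmin hp
  have hΦneg : Φ (x₁, t₁) < 0 := by
    have h1 : Φ (x₁, t₁) ≤ Φ (x₀, t₀) := hzmin' _ hx₀Q
    have hεd : ε * (2*(x₀^2 + 3*t₀ + 1)) = a := by
      rw [hε]; field_simp
    have hS : 0 ≤ x₀^2 + 3*t₀ := by positivity
    have h2 : Φ (x₀, t₀) < 0 := by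
      have : Φ (x₀, t₀) = -a + ε * (x₀^2 + 3*t₀) := by simp [hΦ, ha]
      rw [this]
      nlinarith [mul_pos hεpos (show (0:ℝ) < x₀^2 + 3*t₀ + 2 by positivity)]
    linarith
  have ht₁Icc : t₁ ∈ Icc 0 t₀ := hzQ.2
  have hx₁Icc : x₁ ∈ Icc (-R) R := hzQ.1
  have ht₁pos : 0 < t₁ := by
    rcases eq_or_lt_of_le ht₁Icc.1 with h | h
    · exfalso
      have : Φ (x₁, t₁) = w x₁ 0 + ε * (x₁^2 + 3*0) := by rw [← h]
      have h0 : 0 ≤ Φ (x₁, t₁) := by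
        rw [this]
        have := hinit x₁
        have : 0 ≤ ε * (x₁^2 + 3*0) := by positivity
        linarith [hinit x₁]
      linarith
    · exact h
  have hx₁lt : |x₁| < R := by
    rcases lt_or_ge |x₁| R with h | h
    · exact h
    · exfalso
      have hle : |x₁| ≤ R := abs_le.mpr ⟨hx₁Icc.1, hx₁Icc.2⟩
      have heq : |x₁| = R := le_antisymm hle h
      have hx₁sq : x₁^2 = R^2 := by rw [← sq_abs, heq]
      have h1 : -M₀ ≤ w x₁ t₁ := hM' x₁ t₁ ht₁Icc.1
      have h2 : Φ (x₁, t₁) = w x₁ t₁ + ε * (x₁^2 + 3*t₁) := rfl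
      have h3 : 0 ≤ 3*t₁ := by linarith
      have h4 : ε * R^2 ≤ ε * (x₁^2 + 3*t₁) := by
        rw [hx₁sq]
        apply mul_le_mul_of_nonneg_left _ hεpos.le
        linarith
      nlinarith [hΦneg]
  -- space direction: second derivative of the profile at the min is ≥ 0
  set g : ℝ → ℝ := fun y => w y t₁ + ε * (y^2 + 3*t₁) with hg
  have hwC2 := hC2 t₁ ht₁pos
  have hwdiff : Differentiable ℝ (fun y => w y t₁) :=
    hwC2.differentiable (by norm_num)
  have hwC2' : ContDiff ℝ (1+1) (fun y => w y t₁) := by norm_num; exact hwC2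
  have hwd1 : Differentiable ℝ (deriv (fun y => w y t₁)) :=
    ((contDiff_succ_iff_deriv.mp hwC2').2.2).differentiable (by norm_num)
  have hq1 : ∀ y : ℝ, HasDerivAt (fun y' : ℝ => ε*(y'^2+3*t₁)) (ε*(2*y)) y := by
    intro y
    have := ((hasDerivAt_pow 2 y).add_const (3*t₁)).const_mul ε
    simpa using this
  have hq2 : ∀ y : ℝ, HasDerivAt (fun y' : ℝ => ε*(2*y')) (ε*2) y := by
    intro y
    exact ((hasDerivAt_id y).const_mul (2:ℝ)).const_mul ε |>.congr_deriv (by simp)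
  have hgC2 : ContDiff ℝ 2 g := by
    apply hwC2.add
    fun_prop
  have hglocmin : IsLocalMin g x₁ := by
    have hnhds : Icc (-R) R ∈ 𝓝 x₁ := by
      apply Icc_mem_nhds
      · linarith [(abs_lt.mp hx₁lt).1]
      · linarith [(abs_lt.mp hx₁lt).2]
    apply Filter.eventually_of_mem hnhds
    intro y hy
    have : (y, t₁) ∈ Q := ⟨hy, ht₁Icc⟩
    exact hzmin' _ this
  have h2nd : 0 ≤ deriv (deriv g) x₁ :=
    second_deriv_nonneg_of_isLocalMin hgC2 hglocmin
  have hdg : deriv g = fun y => deriv (fun y' => w y' t₁) y + ε*(2*y) :=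
    funext fun y => (((hwdiff y).hasDerivAt).add (hq1 y)).deriv
  have hddg : deriv (deriv g) x₁ = deriv (deriv (fun y => w y t₁)) x₁ + ε*2 := by
    rw [hdg]
    exact (((hwd1 x₁).hasDerivAt).add (hq2 x₁)).deriv
  have hspace : -(ε*2) ≤ deriv (deriv (fun y => w y t₁)) x₁ := by
    rw [hddg] at h2nd; linarith
  -- time direction
  obtain ⟨d, hdt, hdle⟩ := hsuper x₁ t₁ ht₁pos
  have hkt : HasDerivAt (fun s => w x₁ s + ε*(x₁^2+3*s)) (d + ε*3) t₁ := by
    apply hdt.add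
    simpa using (((hasDerivAt_id t₁).const_mul (3:ℝ)).const_add (x₁^2)).const_mul ε
  have hkmin : ∀ s ∈ Icc 0 t₁, (fun s => w x₁ s + ε*(x₁^2+3*s)) t₁ ≤
      (fun s => w x₁ s + ε*(x₁^2+3*s)) s := by
    intro s hs
    have hsQ : (x₁, s) ∈ Q := ⟨hx₁Icc, ⟨hs.1, le_trans hs.2 ht₁Icc.2⟩⟩
    exact hzmin' _ hsQ
  have hdneg : d + ε*3 ≤ 0 := deriv_nonpos_right ht₁pos hkt hkmin
  linarith



/-- Compute `deriv (deriv (F - G))` when `G` has explicit derivatives. -/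
lemma deriv2_sub_eq (F : ℝ → ℝ) (hF : ContDiff ℝ 2 F) (G G1 G2 : ℝ → ℝ)
    (hG1 : ∀ y, HasDerivAt G (G1 y) y) (hG2 : ∀ y, HasDerivAt G1 (G2 y) y) (x : ℝ) :
    deriv (deriv (fun y => F y - G y)) x = deriv (deriv F) x - G2 x := by
  have hFd : Differentiable ℝ F := hF.differentiable (by norm_num)
  have hF2 : ContDiff ℝ (1+1) F := by norm_num; exact hF
  have hFd1 : Differentiable ℝ (deriv F) :=
    ((contDiff_succ_iff_deriv.mp hF2).2.2).differentiable (by norm_num)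
  have h1 : deriv (fun y => F y - G y) = fun y => deriv F y - G1 y :=
    funext fun y => ((hFd y).hasDerivAt.sub (hG1 y)).deriv
  rw [h1]
  exact ((hFd1 x).hasDerivAt.sub (hG2 x)).deriv

lemma deriv2_sub_eq' (F : ℝ → ℝ) (hF : ContDiff ℝ 2 F) (G G1 G2 : ℝ → ℝ)
    (hG1 : ∀ y, HasDerivAt G (G1 y) y) (hG2 : ∀ y, HasDerivAt G1 (G2 y) y) (x : ℝ) :
    deriv (deriv (fun y => G y - F y)) x = G2 x - deriv (deriv F) x := by
  have hFd : Differentiable ℝ F := hF.differentiable (by norm_num)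
  have hF2 : ContDiff ℝ (1+1) F := by norm_num; exact hF
  have hFd1 : Differentiable ℝ (deriv F) :=
    ((contDiff_succ_iff_deriv.mp hF2).2.2).differentiable (by norm_num)
  have h1 : deriv (fun y => G y - F y) = fun y => G1 y - deriv F y :=
    funext fun y => ((hG1 y).sub (hFd y).hasDerivAt).deriv
  rw [h1]
  exact ((hG2 x).sub (hFd1 x).hasDerivAt).deriv

-- time derivatives of the comparison functions
lemma hasDerivAt_exp_neg (t : ℝ) : HasDerivAt (fun s : ℝ => Real.exp (-s)) (-Real.exp (-t)) t := by
  simpa [Function.comp_def] using (Real.hasDerivAt_exp (-t)).comp t ((hasDerivAt_id t).neg)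

lemma hasDerivAt_exp15 (t : ℝ) :
    HasDerivAt (fun s : ℝ => Real.exp (15*s)) (15*Real.exp (15*t)) t := by
  have h := (Real.hasDerivAt_exp (15*t)).comp t ((hasDerivAt_id t).const_mul (15:ℝ))
  rw [show (15:ℝ)*Real.exp (15*t) = Real.exp (15*t) * (15*1) by ring]
  exact h

lemma hasDerivAt_sm_time (x t : ℝ) :
    HasDerivAt (fun s => Real.exp (-s) * pf x - (Real.exp (15*s) - Real.exp (-s)) * rf x)
      (-Real.exp (-t) * pf x - (15*Real.exp (15*t) + Real.exp (-t)) * rf x) t := by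
  have := ((hasDerivAt_exp_neg t).mul_const (pf x)).sub
    (((hasDerivAt_exp15 t).sub (hasDerivAt_exp_neg t)).mul_const (rf x))
  exact this.congr_deriv (by ring)

lemma hasDerivAt_sp_time (x t : ℝ) :
    HasDerivAt (fun s => Real.exp (-s) * pf x + (Real.exp (15*s) - Real.exp (-s)) * rf x)
      (-Real.exp (-t) * pf x + (15*Real.exp (15*t) + Real.exp (-t)) * rf x) t := by
  have := ((hasDerivAt_exp_neg t).mul_const (pf x)).add
    (((hasDerivAt_exp15 t).sub (hasDerivAt_exp_neg t)).mul_const (rf x))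
  exact this.congr_deriv (by ring)

-- regularity of the comparison functions
lemma continuous_qf : Continuous qf := by
  unfold qf
  exact Continuous.inv₀ (by continuity) (fun x => ne_of_gt (cpos x))

lemma continuous_rf : Continuous rf := by
  unfold rf
  exact Continuous.rpow_const (by continuity) (fun x => Or.inl (ne_of_gt (cpos x)))

lemma continuous_pf : Continuous pf := Real.continuous_sin.mul continuous_qf

lemma contDiff_qf : ContDiff ℝ 2 qf :=
  ContDiff.inv (contDiff_const.add (contDiff_id.pow 2)) (fun x => ne_of_gt (cpos x))

lemma contDiff_rf : ContDiff ℝ 2 rf :=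
  ContDiff.rpow_const_of_ne (contDiff_const.add (contDiff_id.pow 2)) (fun x => ne_of_gt (cpos x))

lemma contDiff_pf : ContDiff ℝ 2 pf := Real.contDiff_sin.mul contDiff_qf

/-- Comparison of `f` with the explicit sub/supersolutions. -/
lemma f_bounds (f : ℝ → ℝ → ℝ)
    (hcont : ContinuousOn (fun p : ℝ × ℝ => f p.1 p.2) {p : ℝ × ℝ | 0 ≤ p.2})
    (hbdd : ∃ C : ℝ, ∀ x t : ℝ, 0 ≤ t → |f x t| ≤ C)
    (hinit : ∀ x : ℝ, f x 0 = Real.sin x / (1 + x ^ 2))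
    (hsmooth : ∀ t : ℝ, 0 < t → ContDiff ℝ 2 (fun y => f y t))
    (hheat : ∀ x : ℝ, ∀ t : ℝ, 0 < t →
      HasDerivAt (fun s => f x s) (deriv (deriv (fun y => f y t)) x) t) :
    ∀ x t : ℝ, 0 ≤ t →
      Real.exp (-t) * pf x - (Real.exp (15*t) - Real.exp (-t)) * rf x ≤ f x t ∧
      f x t ≤ Real.exp (-t) * pf x + (Real.exp (15*t) - Real.exp (-t)) * rf x := by
  obtain ⟨C, hC⟩ := hbdd
  -- common facts
  have hsmcont : Continuous (fun p : ℝ × ℝ =>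
      Real.exp (-p.2) * pf p.1 - (Real.exp (15*p.2) - Real.exp (-p.2)) * rf p.1) := by
    apply Continuous.sub
    · exact (Real.continuous_exp.comp continuous_snd.neg).mul (continuous_pf.comp continuous_fst)
    · exact ((Real.continuous_exp.comp (continuous_const.mul continuous_snd)).sub
        (Real.continuous_exp.comp continuous_snd.neg)).mul (continuous_rf.comp continuous_fst)
  have hspcont : Continuous (fun p : ℝ × ℝ =>
      Real.exp (-p.2) * pf p.1 + (Real.exp (15*p.2) - Real.exp (-p.2)) * rf p.1) := by
    apply Continuous.add
    · exact (Real.continuous_exp.comp continuous_snd.neg).mul (continuous_pf.comp continuous_fst)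
    · exact ((Real.continuous_exp.comp (continuous_const.mul continuous_snd)).sub
        (Real.continuous_exp.comp continuous_snd.neg)).mul (continuous_rf.comp continuous_fst)
  have hsmC2 : ∀ t : ℝ, ContDiff ℝ 2 (fun y =>
      Real.exp (-t) * pf y - (Real.exp (15*t) - Real.exp (-t)) * rf y) := fun t =>
    (contDiff_const.mul contDiff_pf).sub (contDiff_const.mul contDiff_rf)
  have hspC2 : ∀ t : ℝ, ContDiff ℝ 2 (fun y =>
      Real.exp (-t) * pf y + (Real.exp (15*t) - Real.exp (-t)) * rf y) := fun t =>
    (contDiff_const.mul contDiff_pf).add (contDiff_const.mul contDiff_rf)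
  have hexple : ∀ t : ℝ, 0 ≤ t → Real.exp (-t) ≤ 1 := fun t ht =>
    Real.exp_le_one_iff.mpr (by linarith)
  have hee : ∀ t : ℝ, 0 ≤ t → Real.exp (-t) ≤ Real.exp (15*t) := fun t ht =>
    Real.exp_le_exp.2 (by linarith)
  have habs : ∀ x t : ℝ, 0 ≤ t →
      |Real.exp (-t) * pf x| ≤ 1 := by
    intro x t ht
    rw [abs_mul, abs_of_nonneg (Real.exp_pos _).le]
    calc Real.exp (-t) * |pf x| ≤ 1 * 1 := by
          apply mul_le_mul (hexple t ht) _ (abs_nonneg _) zero_le_one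
          exact le_trans (abs_pf_le x) (qf_le_one x)
      _ = 1 := one_mul 1
  -- the x-derivative chains for the comparison functions
  have hsm1 : ∀ t : ℝ, ∀ y : ℝ, HasDerivAt
      (fun y' => Real.exp (-t) * pf y' - (Real.exp (15*t) - Real.exp (-t)) * rf y')
      (Real.exp (-t) * P1 y - (Real.exp (15*t) - Real.exp (-t)) * R1 y) y := fun t y =>
    ((hasDerivAt_pf y).const_mul _).sub ((hasDerivAt_rf y).const_mul _)
  have hsm2 : ∀ t : ℝ, ∀ y : ℝ, HasDerivAt
      (fun y' => Real.exp (-t) * P1 y' - (Real.exp (15*t) - Real.exp (-t)) * R1 y')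
      (Real.exp (-t) * P2 y - (Real.exp (15*t) - Real.exp (-t)) * R2 y) y := fun t y =>
    ((hasDerivAt_P1 y).const_mul _).sub ((hasDerivAt_R1 y).const_mul _)
  have hsp1 : ∀ t : ℝ, ∀ y : ℝ, HasDerivAt
      (fun y' => Real.exp (-t) * pf y' + (Real.exp (15*t) - Real.exp (-t)) * rf y')
      (Real.exp (-t) * P1 y + (Real.exp (15*t) - Real.exp (-t)) * R1 y) y := fun t y =>
    ((hasDerivAt_pf y).const_mul _).add ((hasDerivAt_rf y).const_mul _)
  have hsp2 : ∀ t : ℝ, ∀ y : ℝ, HasDerivAt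
      (fun y' => Real.exp (-t) * P1 y' + (Real.exp (15*t) - Real.exp (-t)) * R1 y')
      (Real.exp (-t) * P2 y + (Real.exp (15*t) - Real.exp (-t)) * R2 y) y := fun t y =>
    ((hasDerivAt_P1 y).const_mul _).add ((hasDerivAt_R1 y).const_mul _)
  have hinit' : ∀ x : ℝ, f x 0 = pf x := by
    intro x
    rw [hinit x, pf, qf, div_eq_mul_inv]
  intro x t ht
  constructor
  · -- lower bound via w₁ = f - sm
    have := minPrinciple (fun x t => f x t -
        (Real.exp (-t) * pf x - (Real.exp (15*t) - Real.exp (-t)) * rf x))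
      (by exact hcont.sub (hsmcont.comp (continuous_id)).continuousOn)
      ⟨C + 1, by
        intro x t ht
        show -(C+1) ≤ f x t - (Real.exp (-t) * pf x - (Real.exp (15*t) - Real.exp (-t)) * rf x)
        have h1 := abs_le.mp (hC x t ht)
        have h2 := abs_le.mp (habs x t ht)
        have h3 : 0 ≤ (Real.exp (15*t) - Real.exp (-t)) * rf x :=
          mul_nonneg (by linarith [hee t ht]) (rf_nonneg x)
        linarith [h1.1, h2.2]⟩
      (by
        intro x
        show (0:ℝ) ≤ f x 0 - (Real.exp (-0) * pf x - (Real.exp (15*0) - Real.exp (-0)) * rf x)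
        rw [hinit' x]
        norm_num)
      (fun t ht => (hsmooth t ht).sub (hsmC2 t))
      (by
        intro x t ht
        refine ⟨deriv (deriv (fun y => f y t)) x -
          (-Real.exp (-t) * pf x - (15*Real.exp (15*t) + Real.exp (-t)) * rf x), ?_, ?_⟩
        · exact (hheat x t ht).sub (hasDerivAt_sm_time x t)
        · show deriv (deriv (fun y => f y t -
              (Real.exp (-t) * pf y - (Real.exp (15*t) - Real.exp (-t)) * rf y))) x ≤ _
          rw [deriv2_sub_eq (fun y => f y t) (hsmooth t ht) _ _ _ (hsm1 t) (hsm2 t) x]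
          have hk := key x t ht.le (pf x + P2 x) (abs_pf_add_P2_le x)
          nlinarith [hk])
      x t ht
    have h9 : 0 ≤ f x t - (Real.exp (-t) * pf x - (Real.exp (15*t) - Real.exp (-t)) * rf x) := this
    linarith
  · -- upper bound via w₂ = sp - f
    have := minPrinciple (fun x t =>
        (Real.exp (-t) * pf x + (Real.exp (15*t) - Real.exp (-t)) * rf x) - f x t)
      (by exact (hspcont.comp (continuous_id)).continuousOn.sub hcont)
      ⟨C + 1, by
        intro x t ht
        show -(C+1) ≤ (Real.exp (-t) * pf x + (Real.exp (15*t) - Real.exp (-t)) * rf x) - f x t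
        have h1 := abs_le.mp (hC x t ht)
        have h2 := abs_le.mp (habs x t ht)
        have h3 : 0 ≤ (Real.exp (15*t) - Real.exp (-t)) * rf x :=
          mul_nonneg (by linarith [hee t ht]) (rf_nonneg x)
        linarith [h1.2, h2.1]⟩
      (by
        intro x
        show (0:ℝ) ≤ (Real.exp (-0) * pf x + (Real.exp (15*0) - Real.exp (-0)) * rf x) - f x 0
        rw [hinit' x]
        norm_num)
      (fun t ht => (hspC2 t).sub (hsmooth t ht))
      (by
        intro x t ht
        refine ⟨(-Real.exp (-t) * pf x + (15*Real.exp (15*t) + Real.exp (-t)) * rf x) -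
          deriv (deriv (fun y => f y t)) x, ?_, ?_⟩
        · exact (hasDerivAt_sp_time x t).sub (hheat x t ht)
        · show deriv (deriv (fun y =>
              (Real.exp (-t) * pf y + (Real.exp (15*t) - Real.exp (-t)) * rf y) - f y t)) x ≤ _
          rw [deriv2_sub_eq' (fun y => f y t) (hsmooth t ht) _ _ _ (hsp1 t) (hsp2 t) x]
          have hk := key x t ht.le (-(pf x + P2 x)) (by rw [abs_neg]; exact abs_pf_add_P2_le x)
          nlinarith [hk])
      x t ht
    have h9 : 0 ≤ (Real.exp (-t) * pf x + (Real.exp (15*t) - Real.exp (-t)) * rf x) - f x t := this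
    linarith

end HeatAux

open HeatAux in
/-- The bounded solution of the heat equation on `ℝ` with initial data `sin(x)/(1+x²)`
decays like `|x|⁻²` for each positive time, and this decay rate does not improve. -/
theorem heat_no_improved_decay (f : ℝ → ℝ → ℝ)
    (hcont : ContinuousOn (fun p : ℝ × ℝ => f p.1 p.2) {p : ℝ × ℝ | 0 ≤ p.2})
    (hbdd : ∃ C : ℝ, ∀ x t : ℝ, 0 ≤ t → |f x t| ≤ C)
    (hinit : ∀ x : ℝ, f x 0 = Real.sin x / (1 + x ^ 2))
    (hsmooth : ∀ t : ℝ, 0 < t → ContDiff ℝ 2 (fun y => f y t))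
    (hheat : ∀ x : ℝ, ∀ t : ℝ, 0 < t →
      HasDerivAt (fun s => f x s) (deriv (deriv (fun y => f y t)) x) t) :
    ∀ t₀ : ℝ, 0 < t₀ →
      ((fun x => f x t₀) =O[cocompact ℝ] fun x => (x ^ 2)⁻¹) ∧
      ¬ ((fun x => f x t₀) =o[cocompact ℝ] fun x => (x ^ 2)⁻¹) := by
  intro t₀ ht₀
  have hfb := HeatAux.f_bounds f hcont hbdd hinit hsmooth hheat
  have hA : 0 < Real.exp (-t₀) := Real.exp_pos _
  have hBA : Real.exp (-t₀) ≤ Real.exp (15*t₀) := Real.exp_le_exp.2 (by linarith)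
  constructor
  · -- O((x²)⁻¹)
    rw [isBigO_iff]
    refine ⟨Real.exp (-t₀) + Real.exp (15*t₀), ?_⟩
    have hkey : ∀ x : ℝ, 1 ≤ |x| →
        ‖f x t₀‖ ≤ (Real.exp (-t₀) + Real.exp (15*t₀)) * ‖(x^2)⁻¹‖ := by
      intro x hx
      have hx2 : (0:ℝ) < x^2 := by
        have : x ≠ 0 := by
          intro h; rw [h] at hx; simp at hx; linarith
        positivity
      have hq : qf x ≤ (x^2)⁻¹ := by
        rw [qf]
        exact inv_anti₀ hx2 (by linarith)
      have hpfq := abs_pf_le x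
      have hrq := rf_le_qf x
      have hr0 := rf_nonneg x
      have hq0 := qf_nonneg x
      obtain ⟨hl, hu⟩ := hfb x t₀ ht₀.le
      have habsf : |f x t₀| ≤ (Real.exp (-t₀) + Real.exp (15*t₀)) * qf x := by
        rw [abs_le]
        constructor
        · nlinarith [abs_le.mp hpfq, mul_le_mul_of_nonneg_left (abs_le.mp hpfq).1 hA.le,
            mul_nonneg (sub_nonneg.2 hBA) hr0]
        · nlinarith [mul_le_mul_of_nonneg_left (abs_le.mp hpfq).2 hA.le,
            mul_nonneg (sub_nonneg.2 hBA) hr0]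
      rw [Real.norm_eq_abs, Real.norm_eq_abs, abs_of_nonneg (by positivity : (0:ℝ) ≤ (x^2)⁻¹)]
      calc |f x t₀| ≤ (Real.exp (-t₀) + Real.exp (15*t₀)) * qf x := habsf
        _ ≤ (Real.exp (-t₀) + Real.exp (15*t₀)) * (x^2)⁻¹ :=
            mul_le_mul_of_nonneg_left hq (by positivity)
    rw [cocompact_eq_atBot_atTop, eventually_sup]
    constructor
    · filter_upwards [eventually_le_atBot (-1:ℝ)] with x hx
      exact hkey x (by rw [abs_of_nonpos (by linarith)]; linarith)
    · filter_upwards [eventually_ge_atTop (1:ℝ)] with x hx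
      exact hkey x (by rw [abs_of_nonneg (by linarith)]; linarith)
  · -- not o((x²)⁻¹)
    intro ho
    set a : ℕ → ℝ := fun n => π/2 + n*(2*π) with haa
    have hat : Tendsto a atTop atTop := by
      apply tendsto_atTop_add_const_left
      exact Tendsto.atTop_mul_const (by positivity) tendsto_natCast_atTop_atTop
    have hacc : Tendsto a atTop (cocompact ℝ) := by
      rw [cocompact_eq_atBot_atTop]; exact hat.mono_right le_sup_right
    have h3 := (ho.comp_tendsto hacc).tendsto_div_nhds_zero
    simp only [Function.comp_def, div_inv_eq_mul] at h3
    -- comparison limits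
    have lim1 : Tendsto (fun x : ℝ => x^2 * qf x) atTop (𝓝 1) := by
      have heq : (fun x : ℝ => x^2 * qf x) = fun x : ℝ => 1 - (1+x^2)⁻¹ := by
        funext x
        rw [qf]
        have := cpos x
        field_simp
        ring
      rw [heq]
      have h4 : Tendsto (fun x : ℝ => (1+x^2)⁻¹) atTop (𝓝 0) :=
        tendsto_inv_atTop_zero.comp
          (tendsto_atTop_add_const_left _ 1 (tendsto_pow_atTop two_ne_zero))
      simpa using tendsto_const_nhds.sub h4
    have lim2 : Tendsto (fun x : ℝ => x^2 * rf x) atTop (𝓝 0) := by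
      apply squeeze_zero (g := fun x : ℝ => (1+x^2) ^ (-((1:ℝ)/2)))
      · intro x; exact mul_nonneg (sq_nonneg x) (rf_nonneg x)
      · intro x
        have h5 : x^2 * rf x ≤ (1+x^2) * rf x :=
          mul_le_mul_of_nonneg_right (by nlinarith [sq_nonneg x]) (rf_nonneg x)
        have h6 : (1+x^2) * rf x = (1+x^2) ^ (-((1:ℝ)/2)) := by
          rw [rf, ← Real.rpow_one_add' (cpos x).le (by norm_num)]
          norm_num
        linarith
      · exact (tendsto_rpow_neg_atTop (by norm_num : (0:ℝ) < 1/2)).comp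
          (tendsto_atTop_add_const_left _ 1 (tendsto_pow_atTop two_ne_zero))
    have hsin : ∀ n : ℕ, Real.sin (a n) = 1 := by
      intro n
      rw [show a n = π/2 + n*(2*π) from rfl, Real.sin_add_nat_mul_two_pi, Real.sin_pi_div_two]
    have hBn : Tendsto (fun n => Real.exp (-t₀) * ((a n)^2 * qf (a n)) -
        (Real.exp (15*t₀) - Real.exp (-t₀)) * ((a n)^2 * rf (a n))) atTop
        (𝓝 (Real.exp (-t₀) * 1 - (Real.exp (15*t₀) - Real.exp (-t₀)) * 0)) :=
      (((lim1.comp hat).const_mul _)).sub (((lim2.comp hat).const_mul _))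
    have hle : ∀ n : ℕ, Real.exp (-t₀) * ((a n)^2 * qf (a n)) -
        (Real.exp (15*t₀) - Real.exp (-t₀)) * ((a n)^2 * rf (a n)) ≤ f (a n) t₀ * (a n)^2 := by
      intro n
      have h5 := (hfb (a n) t₀ ht₀.le).1
      have h6 := mul_le_mul_of_nonneg_right h5 (sq_nonneg (a n))
      have h7 : pf (a n) = qf (a n) := by rw [pf, hsin n, one_mul]
      calc Real.exp (-t₀) * ((a n)^2 * qf (a n)) -
          (Real.exp (15*t₀) - Real.exp (-t₀)) * ((a n)^2 * rf (a n))
          = (Real.exp (-t₀) * pf (a n) -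
            (Real.exp (15*t₀) - Real.exp (-t₀)) * rf (a n)) * (a n)^2 := by rw [h7]; ring
        _ ≤ f (a n) t₀ * (a n)^2 := h6
    have hfinal := le_of_tendsto_of_tendsto' hBn h3 hle
    simp only [mul_one, mul_zero, sub_zero] at hfinal
    linarith [Real.exp_pos (-t₀)]
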